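/- Let q, r, s be nonzero elements of a field and suppose integers n < j satisfy q^{n(n-1)/2}(-r)^n s = -1 and either (j-n even and (q^{n+j-1}r^2)^{(j-n)/2} has geometric sum ∑_{i=0}^{(j-n)/2-1}(q^{n+j-1}r^2)^i = 0) or (j-n odd and ∑_{i=0}^{j-n-1}(-q^{(n+j-1)/2}r)^i = 0). Then q^{j(j-1)/2}(-r)^j s = -1. -/
import Mathlib


variable {K : Type*} [Field K]

/-- The q-number `(k)_x = ∑_{i=0}^{k-1} x^i`. -/
def qNum (x : K) (k : ℕ) : K := ∑ i ∈ Finset.range k, x ^ i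

/-- The q-factorial `(m)_q! = ∏_{k=1}^m (k)_q`. -/
def qFac (q : K) (m : ℕ) : K := ∏ k ∈ Finset.range m, qNum q (k + 1)

/-- `b_m = ∏_{i=0}^{m-1} (1 - q^i r)`. -/
def bProd (q r : K) (m : ℕ) : K := ∏ i ∈ Finset.range m, (1 - q ^ i * r)

/-- The recursively defined set 𝕁 = 𝕁^p_{q,r,s}. -/
def memJ (q r s : K) : ℕ → Prop
  | j => q ^ (j * (j - 1) / 2) * (-r) ^ j * s = -1 ∧
      ∀ n, n < j → memJ q r s n →
        if (j - n) % 2 = 0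
        then qNum (q ^ (n + j - 1) * r ^ 2) ((j - n) / 2) = 0
        else qNum (-(q ^ ((n + j - 1) / 2) * r)) (j - n) = 0
  termination_by j => j

/-- The subset 𝕁₁ ⊆ 𝕁 (condition (1) of Lemma le:J). -/
def memJ1 (q r s : K) (j : ℕ) : Prop :=
  memJ q r s j ∧ ∀ k, k < j → memJ q r s k → q ^ (k + j - 1) * r ^ 2 ≠ 1

/-- The subset 𝕁₂ ⊆ 𝕁 (condition (2) of Lemma le:J). -/
def memJ2 (q r s : K) (n : ℕ) : Prop :=
  memJ q r s n ∧ ∃ j, j < n ∧ memJ q r s j ∧ q ^ (n + j - 1) * r ^ 2 = 1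


lemma pow_eq_one_of_qNum {x : K} {k : ℕ} (h : qNum x k = 0) : x ^ k = 1 := by
  have h2 := geom_sum_mul x k
  rw [show (∑ i ∈ Finset.range k, x ^ i) = qNum x k from rfl, h, zero_mul] at h2
  exact sub_eq_zero.mp h2.symm

lemma even_nmul (n : ℕ) : ∃ b, n * (n - 1) = 2 * b := by
  rcases Nat.even_or_odd n with ⟨k, hk⟩ | ⟨k, hk⟩
  · exact ⟨k * (n - 1), by rw [hk]; ring⟩
  · refine ⟨n * k, ?_⟩
    have h1 : n - 1 = 2 * k := by omega
    rw [h1]; ring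

theorem stmt_2 (q r s : K) (hq : q ≠ 0) (hr : r ≠ 0) (hs : s ≠ 0) (n j : ℕ) (hnj : n < j)
    (hn : q ^ (n * (n - 1) / 2) * (-r) ^ n * s = -1)
    (h : ((j - n) % 2 = 0 ∧ qNum (q ^ (n + j - 1) * r ^ 2) ((j - n) / 2) = 0) ∨
         ((j - n) % 2 = 1 ∧ qNum (-(q ^ ((n + j - 1) / 2) * r)) (j - n) = 0)) :
    q ^ (j * (j - 1) / 2) * (-r) ^ j * s = -1 := by
  obtain ⟨b, hb⟩ := even_nmul n
  rcases h with ⟨hmod, hsum⟩ | ⟨hmod, hsum⟩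
  · obtain ⟨t, rfl⟩ : ∃ t, j = n + (2 * t + 2) := ⟨(j - n) / 2 - 1, by omega⟩
    rw [show (n + (2 * t + 2) - n) / 2 = t + 1 by omega,
        show n + (n + (2 * t + 2)) - 1 = 2 * n + 2 * t + 1 by omega] at hsum
    have hx := pow_eq_one_of_qNum hsum
    have hj2 : (n + (2 * t + 2)) * (n + (2 * t + 2) - 1)
        = 2 * (b + (t + 1) * (2 * n + 2 * t + 1)) := by
      have h1 : n + (2 * t + 2) - 1 = n + 2 * t + 1 := by omega
      have h2 : n * n = 2 * b + n := by
        rcases n with _ | m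
        · omega
        · have : m + 1 - 1 = m := rfl
          rw [this] at hb; nlinarith [hb]
      rw [h1]; nlinarith [h2]
    have hdiv : (n + (2 * t + 2)) * (n + (2 * t + 2) - 1) / 2
        = n * (n - 1) / 2 + (t + 1) * (2 * n + 2 * t + 1) := by
      rw [hj2, hb, Nat.mul_div_cancel_left _ two_pos, Nat.mul_div_cancel_left _ two_pos]
    have hone : q ^ ((t + 1) * (2 * n + 2 * t + 1)) * (-r) ^ (2 * t + 2) = 1 := by
      have e1 : (-r) ^ (2 * t + 2) = (r ^ 2) ^ (t + 1) := by
        rw [← pow_mul, Even.neg_pow ⟨t + 1, by ring⟩, show 2 * (t + 1) = 2 * t + 2 by ring]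
      have e2 : q ^ ((t + 1) * (2 * n + 2 * t + 1)) = (q ^ (2 * n + 2 * t + 1)) ^ (t + 1) := by
        rw [mul_comm, pow_mul]
      rw [e1, e2, ← mul_pow, hx]
    rw [hdiv, pow_add, pow_add]
    calc q ^ (n * (n - 1) / 2) * q ^ ((t + 1) * (2 * n + 2 * t + 1)) * ((-r) ^ n * (-r) ^ (2 * t + 2)) * s
        = (q ^ (n * (n - 1) / 2) * (-r) ^ n * s) * (q ^ ((t + 1) * (2 * n + 2 * t + 1)) * (-r) ^ (2 * t + 2)) := by ring
      _ = -1 := by rw [hn, hone, mul_one]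
  · obtain ⟨t, rfl⟩ : ∃ t, j = n + (2 * t + 1) := ⟨(j - n) / 2, by omega⟩
    rw [show (n + (n + (2 * t + 1)) - 1) / 2 = n + t by omega,
        show n + (2 * t + 1) - n = 2 * t + 1 by omega] at hsum
    have hx := pow_eq_one_of_qNum hsum
    have hj2 : (n + (2 * t + 1)) * (n + (2 * t + 1) - 1)
        = 2 * (b + (2 * t + 1) * (n + t)) := by
      have h1 : n + (2 * t + 1) - 1 = n + 2 * t := by omega
      have h2 : n * n = 2 * b + n := by
        rcases n with _ | m
        · omega
        · have : m + 1 - 1 = m := rfl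
          rw [this] at hb; nlinarith [hb]
      rw [h1]; nlinarith [h2]
    have hdiv : (n + (2 * t + 1)) * (n + (2 * t + 1) - 1) / 2
        = n * (n - 1) / 2 + (2 * t + 1) * (n + t) := by
      rw [hj2, hb, Nat.mul_div_cancel_left _ two_pos, Nat.mul_div_cancel_left _ two_pos]
    have hone : q ^ ((2 * t + 1) * (n + t)) * (-r) ^ (2 * t + 1) = 1 := by
      rw [mul_comm (2 * t + 1), pow_mul, ← mul_pow, mul_neg, hx]
    rw [hdiv, pow_add, pow_add]
    calc q ^ (n * (n - 1) / 2) * q ^ ((2 * t + 1) * (n + t)) * ((-r) ^ n * (-r) ^ (2 * t + 1)) * s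
        = (q ^ (n * (n - 1) / 2) * (-r) ^ n * s) * (q ^ ((2 * t + 1) * (n + t)) * (-r) ^ (2 * t + 1)) := by ring
      _ = -1 := by rw [hn, hone, mul_one]
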